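/- Let n ≥ 3 and k ≥ 1 be natural numbers, and let a₀ be a real number with A_n(a₀) = 0. Then the multiplicity of a₀ as a root of (the real polynomial obtained from) A_{kn} equals the multiplicity of a₀ as a root of A_n. (In terms of eigenvalues λ = 2 − a₀: every eigenvalue of the Laplacian of Z_n of multiplicity r is an eigenvalue of the Laplacian of Z_{kn} of the same multiplicity r.) -/

import Mathlib

open Polynomial

/-- The sequence of integer polynomials `L 0 = 1`, `L 1 = X`,
`L (n+2) = X * L (n+1) - L n`. -/
noncomputable def L : ℕ → Polynomial ℤ
  | 0 => 1
  | 1 => X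
  | n + 2 => X * L (n + 1) - L n

/-- The sequence of integer polynomials `A 0 = 0`, `A 1 = X - 2`,
`A n = L n - L (n-2) - 2` for `n ≥ 2`. -/
noncomputable def A : ℕ → Polynomial ℤ
  | 0 => 0
  | 1 => X - 2
  | n + 2 => L (n + 2) - L n - 2

lemma C_two_eq : (C (2:ℝ)) = 2 := map_ofNat C 2

lemma half_two : (2:ℝ[X]) * (C (2⁻¹:ℝ) * X) = X := by
  rw [← C_two_eq, ← mul_assoc, ← C_mul]
  norm_num

open Polynomial.Chebyshev in
/-- `L n` maps to `U n` composed with `X/2`. -/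
lemma L_map_eq : ∀ m : ℕ,
    (L m).map (Int.castRingHom ℝ) = (U ℝ m).comp (C (2⁻¹ : ℝ) * X)
  | 0 => by
      rw [show ((0:ℕ):ℤ) = 0 by norm_num, U_zero, one_comp]
      simp only [L, Polynomial.map_one]
  | 1 => by
      rw [show ((1:ℕ):ℤ) = 1 by norm_num, U_one, mul_comp, ofNat_comp, X_comp]
      simp only [L, Polynomial.map_X]
      linear_combination -half_two
  | (m + 2) => by
      have h1 := L_map_eq (m + 1)
      have h2 := L_map_eq m
      simp only [L, Polynomial.map_sub, Polynomial.map_mul, Polynomial.map_X]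
      rw [show ((m + 1 : ℕ) : ℤ) = (m : ℤ) + 1 by push_cast; ring] at h1
      rw [show ((m + 2 : ℕ) : ℤ) = (m : ℤ) + 2 by push_cast; ring, U_add_two,
        sub_comp, mul_comp, mul_comp, ofNat_comp, X_comp, h1, h2]
      linear_combination (-((U ℝ ((m:ℤ) + 1)).comp (C (2⁻¹:ℝ) * X))) * half_two

open Polynomial.Chebyshev in
/-- Key formula: `A n` maps to `2 T n (X/2) - 2` for `n ≥ 1`. -/
lemma A_map_eq : ∀ m : ℕ, 1 ≤ m →
    (A m).map (Int.castRingHom ℝ)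
      = (2:ℝ[X]) * (T ℝ m).comp (C (2⁻¹ : ℝ) * X) - 2
  | 0, h => by omega
  | 1, _ => by
      rw [show ((1:ℕ):ℤ) = 1 by norm_num, T_one, X_comp]
      simp only [A, Polynomial.map_sub, Polynomial.map_X, Polynomial.map_ofNat]
      linear_combination -half_two
  | (m + 2), _ => by
      have h1 := L_map_eq (m + 2)
      have h2 := L_map_eq m
      have hT : (2:ℝ[X]) * T ℝ ((m:ℤ) + 2) = U ℝ ((m:ℤ) + 2) - U ℝ m := by
        have e1 := T_eq_U_sub_X_mul_U ℝ ((m:ℤ) + 2)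
        have e2 := U_add_two ℝ m
        rw [show (m:ℤ) + 2 - 1 = (m:ℤ) + 1 by ring] at e1
        linear_combination 2 * e1 + e2
      simp only [A, Polynomial.map_sub, Polynomial.map_ofNat]
      rw [show ((m + 2 : ℕ) : ℤ) = (m : ℤ) + 2 by push_cast; ring] at h1 ⊢
      rw [h1, h2, ← sub_comp, ← hT, mul_comp, ofNat_comp]
      push_cast
      ring

open Polynomial.Chebyshev in
/-- The composition identity `A (k*n) = A k ∘ (A n + 2)` over `ℝ`. -/
lemma A_comp_eq (k n : ℕ) (hk : 1 ≤ k) (hn : 1 ≤ n) :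
    (A (k * n)).map (Int.castRingHom ℝ)
      = ((A k).map (Int.castRingHom ℝ)).comp ((A n).map (Int.castRingHom ℝ) + 2) := by
  have hkn : 1 ≤ k * n := Nat.one_le_iff_ne_zero.mpr (by positivity)
  rw [A_map_eq _ hkn, A_map_eq _ hk, A_map_eq _ hn]
  have hs : (C (2⁻¹:ℝ) * X).comp ((2:ℝ[X]) * (T ℝ n).comp (C (2⁻¹:ℝ) * X) - 2 + 2)
      = (T ℝ n).comp (C (2⁻¹:ℝ) * X) := by
    rw [mul_comp, C_comp, X_comp]
    rw [sub_add_cancel, ← mul_assoc, ← C_two_eq, ← Polynomial.C_mul]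
    norm_num
  rw [sub_comp, mul_comp, ofNat_comp, comp_assoc, hs,
    ← comp_assoc, ← T_mul, show ((k * n : ℕ) : ℤ) = (k:ℤ) * n by push_cast; ring]
  push_cast
  ring

open Polynomial.Chebyshev in
lemma U_eval_one : ∀ m : ℤ, (U ℝ m).eval 1 = m + 1 := by
  intro m
  induction m using Polynomial.Chebyshev.induct with
  | zero => simp
  | one => rw [U_one]; simp; norm_num
  | add_two m ih1 ih2 =>
      rw [U_add_two]
      push_cast
      simp only [eval_sub, eval_mul, eval_ofNat, eval_X] at *
      rw [ih1, ih2]; push_cast; ring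
  | neg_add_one m ih1 ih2 =>
      have := U_add_two ℝ (-(m:ℤ) - 1)
      rw [show (-(m:ℤ) - 1 + 2) = -(m:ℤ) + 1 by ring, show (-(m:ℤ) - 1 + 1) = -(m:ℤ) by ring]
        at this
      have h3 := congrArg (eval (1:ℝ)) this
      simp only [eval_sub, eval_mul, eval_ofNat, eval_X] at h3
      rw [ih1, ih2] at h3
      push_cast at h3 ⊢
      linarith

open Polynomial.Chebyshev in
lemma T_eval_one (m : ℤ) : (T ℝ m).eval 1 = 1 := by
  have := T_real_cos (0:ℝ) m
  simpa using this

open Polynomial.Chebyshev in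
lemma A_eval_two (k : ℕ) (hk : 1 ≤ k) :
    ((A k).map (Int.castRingHom ℝ)).eval 2 = 0 := by
  rw [A_map_eq k hk]
  simp only [eval_sub, eval_mul, eval_ofNat, eval_comp, eval_C, eval_X]
  rw [show (2⁻¹:ℝ) * 2 = 1 by norm_num, _root_.T_eval_one]
  norm_num

open Polynomial.Chebyshev in
lemma A_deriv_eval_two (k : ℕ) (hk : 1 ≤ k) :
    (derivative ((A k).map (Int.castRingHom ℝ))).eval 2 = (k:ℝ)^2 := by
  rw [A_map_eq k hk]
  rw [derivative_sub, derivative_mul, derivative_comp, derivative_mul, derivative_C,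
    derivative_X]
  simp only [derivative_ofNat, zero_mul, mul_one, zero_add, zero_sub, sub_zero,
    eval_mul, eval_add, eval_neg, eval_comp, eval_C, eval_X, eval_ofNat, eval_zero]
  rw [T_derivative_eq_U (R := ℝ) (k:ℤ)]
  simp only [eval_mul, eval_comp, eval_C, eval_X, eval_intCast]
  rw [show (2⁻¹:ℝ) * 2 = 1 by norm_num, U_eval_one ((k:ℤ) - 1)]
  push_cast
  ring

lemma L_coeff_deg : ∀ m : ℕ, (L m).coeff m = 1 ∧ (L m).degree ≤ m
  | 0 => by simp [L]
  | 1 => by simp [L]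
  | (m + 2) => by
      obtain ⟨c1, d1⟩ := L_coeff_deg (m + 1)
      obtain ⟨c2, d2⟩ := L_coeff_deg m
      constructor
      · simp only [L, coeff_sub, coeff_X_mul, c1]
        rw [Polynomial.coeff_eq_zero_of_degree_lt (lt_of_le_of_lt d2 (by
          exact_mod_cast Nat.lt_of_lt_of_le (Nat.lt_succ_self m) (by omega)))]
        ring
      · simp only [L]
        refine le_trans (degree_sub_le _ _) (max_le ?_ (le_trans d2 (by
          exact_mod_cast Nat.le_add_right m 2)))
        refine le_trans (degree_mul_le _ _) ?_
        calc degree (X : ℤ[X]) + degree (L (m+1)) ≤ 1 + (m+1 : ℕ) := by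
              exact add_le_add degree_X_le d1
          _ ≤ ((m + 2 : ℕ) : WithBot ℕ) := le_of_eq (by push_cast; ring)

lemma A_map_ne_zero (m : ℕ) (hm : 3 ≤ m) : (A m).map (Int.castRingHom ℝ) ≠ 0 := by
  obtain ⟨p, rfl⟩ : ∃ p, m = p + 2 := ⟨m - 2, by omega⟩
  have hc : (A (p + 2)).coeff (p + 2) = 1 := by
    obtain ⟨c1, d1⟩ := L_coeff_deg (p + 2)
    obtain ⟨c2, d2⟩ := L_coeff_deg p
    simp only [A, coeff_sub, c1]
    rw [Polynomial.coeff_eq_zero_of_degree_lt (lt_of_le_of_lt d2 (by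
      exact_mod_cast Nat.lt_of_lt_of_le (Nat.lt_succ_self p) (by omega)))]
    rw [show (2:ℤ[X]) = C 2 from (map_ofNat C 2).symm, coeff_C, if_neg (by omega)]
    ring
  intro hcon
  have := congrArg (fun q => Polynomial.coeff q (p + 2)) hcon
  simp only [coeff_map, hc, coeff_zero] at this
  norm_num at this

theorem stmt_15 (n k : ℕ) (hn : 3 ≤ n) (hk : 1 ≤ k) (a₀ : ℝ)
    (h : Polynomial.aeval a₀ (A n) = 0) :
    Polynomial.rootMultiplicity a₀ ((A (k * n)).map (Int.castRingHom ℝ)) =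
      Polynomial.rootMultiplicity a₀ ((A n).map (Int.castRingHom ℝ)) := by
  set f : ℝ[X] := (A n).map (Int.castRingHom ℝ) with hf
  set g : ℝ[X] := (A k).map (Int.castRingHom ℝ) with hg
  have hn1 : 1 ≤ n := by omega
  have hf0 : f.eval a₀ = 0 := by
    rw [hf, eval_map, ← algebraMap_int_eq, ← aeval_def]
    exact h
  -- factor g = (X - C 2) * h
  have hg2 : g.IsRoot 2 := A_eval_two k hk
  set q : ℝ[X] := g /ₘ (X - C 2) with hq
  have hfact : (X - C 2) * q = g := mul_divByMonic_eq_iff_isRoot.mpr hg2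
  have hq2 : q.eval 2 = (k:ℝ)^2 := by
    have := congrArg (fun p => (derivative p).eval 2) hfact
    simp only [derivative_mul, derivative_sub, derivative_X, derivative_C, sub_zero,
      one_mul, eval_add, eval_mul, eval_sub, eval_X, eval_C, sub_self, zero_mul,
      add_zero] at this
    rw [A_deriv_eval_two k hk] at this
    linarith
  have hq2ne : q.eval 2 ≠ 0 := by
    rw [hq2]
    positivity
  -- the composition identity
  have hcomp : (A (k * n)).map (Int.castRingHom ℝ) = g.comp (f + 2) :=
    A_comp_eq k n hk hn1
  have hfeval2 : (f + 2).eval a₀ = 2 := by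
    simp [hf0]
  have key : (A (k * n)).map (Int.castRingHom ℝ) = f * q.comp (f + 2) := by
    rw [hcomp, ← hfact, mul_comp, sub_comp, X_comp, C_comp, C_two_eq]
    ring
  have hqcomp_eval : (q.comp (f + 2)).eval a₀ = (k:ℝ)^2 := by
    rw [eval_comp, hfeval2, hq2]
  have hkne : ((k:ℝ))^2 ≠ 0 := by
    have : (k:ℝ) ≠ 0 := Nat.cast_ne_zero.mpr (by omega)
    positivity
  have hqcomp_ne : q.comp (f + 2) ≠ 0 := by
    intro hcon
    rw [hcon, eval_zero] at hqcomp_eval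
    exact hkne hqcomp_eval.symm
  have hnotroot : ¬ IsRoot (q.comp (f + 2)) a₀ := by
    intro hroot
    rw [IsRoot.def, hqcomp_eval] at hroot
    exact hkne hroot
  have hfne : f ≠ 0 := A_map_ne_zero n hn
  rw [key, rootMultiplicity_mul (mul_ne_zero hfne hqcomp_ne),
    rootMultiplicity_eq_zero hnotroot, add_zero]
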